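/- Let G be a finite abelian group and let r ≥ 2 be a multiple of exp(G). Then limsup_{n→∞} T_{r-1}(n, s_r(G), r) / (n − r + 1) ≤ 1/|G|, where T_{r-1}(n,k,r) is the minimum of Δ_{r-1}(H) over all r-graphs H on n vertices with independence number α(H) < k. -/

import Mathlib

/-- `s_r(G)`: the smallest `s` such that every multiset of `s` elements of `G`
has a zero-sum sub-multiset of size `r`. -/
noncomputable def egzConst (G : Type*) [AddCommGroup G] [Fintype G] (r : ℕ) : ℕ :=
  sInf {s | ∀ S : Multiset G, Multiset.card S = s →
    ∃ T ≤ S, Multiset.card T = r ∧ T.sum = 0}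

/-- `Δ_l(H)`: the maximum, over `l`-element vertex subsets `A`, of the number of
edges of `H` containing `A`. -/
def maxDeg (n : ℕ) (H : Finset (Finset (Fin n))) (l : ℕ) : ℕ :=
  (Finset.univ.filter (fun A : Finset (Fin n) => A.card = l)).sup
    (fun A => (H.filter (fun e => A ⊆ e)).card)

/-- `T_l(n,k,r)`: the minimum of `Δ_l(H)` over all `r`-graphs `H` on `n` vertices
with independence number `α(H) < k`. -/
noncomputable def turanMinDeg (l n k r : ℕ) : ℕ :=
  sInf {D | ∃ H : Finset (Finset (Fin n)),
    (∀ e ∈ H, e.card = r) ∧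
    (∀ S : Finset (Fin n), (∀ e ∈ H, ¬ e ⊆ S) → S.card < k) ∧
    maxDeg n H l = D}

/-- Sub-multisets of a mapped multiset lift. -/
lemma exists_le_of_le_map {α β : Type*} [DecidableEq β] (f : α → β) :
    ∀ (s : Multiset α) (T : Multiset β), T ≤ s.map f → ∃ t ≤ s, t.map f = T := by
  intro s
  induction s using Multiset.induction_on with
  | empty =>
    intro T hT
    simp only [Multiset.map_zero, Multiset.le_zero] at hT
    exact ⟨0, le_refl _, by simp [hT]⟩
  | cons a s ih =>
    intro T hT
    rw [Multiset.map_cons] at hT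
    by_cases h : f a ∈ T
    · have h1 : T.erase (f a) ≤ s.map f := by
        have := Multiset.erase_le_erase (f a) hT
        rwa [Multiset.erase_cons_head] at this
      obtain ⟨t, ht, hmap⟩ := ih _ h1
      exact ⟨a ::ₘ t, Multiset.cons_le_cons _ ht, by
        rw [Multiset.map_cons, hmap, Multiset.cons_erase h]⟩
    · have h1 : T ≤ s.map f := by
        rw [Multiset.le_iff_count] at hT ⊢
        intro b
        rcases eq_or_ne b (f a) with rfl | hb
        · simp [Multiset.count_eq_zero_of_notMem h]
        · have := hT b
          rwa [Multiset.count_cons_of_ne hb] at this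
      obtain ⟨t, ht, hmap⟩ := ih _ h1
      exact ⟨t, ht.trans (Multiset.le_cons_self _ _), hmap⟩

/-- The set defining `egzConst` is nonempty: `|G|·(r-1)+1` belongs to it. -/
lemma egz_set_mem (G : Type*) [AddCommGroup G] [Fintype G] (r : ℕ) (hr : 1 ≤ r)
    (hdvd : AddMonoid.exponent G ∣ r) :
    (Fintype.card G * (r - 1) + 1) ∈ {s | ∀ S : Multiset G, Multiset.card S = s →
      ∃ T ≤ S, Multiset.card T = r ∧ T.sum = 0} := by
  classical
  intro S hS
  -- pigeonhole: some element appears at least `r` times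
  have hex : ∃ g : G, r ≤ S.count g := by
    by_contra hcon
    push_neg at hcon
    have hle : ∀ g ∈ S.toFinset, S.count g ≤ r - 1 := fun g _ =>
      Nat.le_sub_one_of_lt (hcon g)
    have h1 : Multiset.card S ≤ S.toFinset.card * (r - 1) := by
      rw [← Multiset.toFinset_sum_count_eq]
      calc ∑ a ∈ S.toFinset, S.count a ≤ ∑ _a ∈ S.toFinset, (r - 1) :=
            Finset.sum_le_sum hle
        _ = S.toFinset.card * (r - 1) := by rw [Finset.sum_const, smul_eq_mul]
    have h2 : S.toFinset.card ≤ Fintype.card G := Finset.card_le_univ _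
    have : Multiset.card S ≤ Fintype.card G * (r - 1) :=
      h1.trans (Nat.mul_le_mul_right _ h2)
    omega
  obtain ⟨g, hg⟩ := hex
  refine ⟨Multiset.replicate r g, (Multiset.le_count_iff_replicate_le).mp hg, ?_, ?_⟩
  · simp
  · rw [Multiset.sum_replicate]
    exact (AddMonoid.exponent_dvd_iff_forall_nsmul_eq_zero.mp hdvd g : r • g = 0)

/-- Key construction bound: `T_{r-1}(n, s_r(G), r) ≤ n/|G| + 1`. -/
lemma turan_le (G : Type*) [AddCommGroup G] [Fintype G] (r : ℕ) (hr : 2 ≤ r)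
    (hdvd : AddMonoid.exponent G ∣ r) (n : ℕ) :
    turanMinDeg (r - 1) n (egzConst G r) r ≤ n / Fintype.card G + 1 := by
  classical
  set q := Fintype.card G with hqdef
  have hq : 0 < q := Fintype.card_pos
  set eqv : Fin q ≃ G := (Fintype.equivFinOfCardEq rfl).symm with heqv
  set f : Fin n → G := fun i => eqv ⟨(i : ℕ) % q, Nat.mod_lt _ hq⟩ with hf
  set H : Finset (Finset (Fin n)) :=
    Finset.univ.filter (fun e => e.card = r ∧ ∑ x ∈ e, f x = 0) with hH
  have hedge : ∀ e ∈ H, e.card = r := by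
    intro e he
    exact ((Finset.mem_filter.mp he).2).1
  -- independence
  have hkmem : egzConst G r ∈ {s | ∀ S : Multiset G, Multiset.card S = s →
      ∃ T ≤ S, Multiset.card T = r ∧ T.sum = 0} :=
    Nat.sInf_mem ⟨_, egz_set_mem G r (by omega) hdvd⟩
  have hind : ∀ S : Finset (Fin n), (∀ e ∈ H, ¬ e ⊆ S) → S.card < egzConst G r := by
    intro S hS
    by_contra hcon
    push_neg at hcon
    obtain ⟨S', hS'sub, hS'card⟩ := Finset.exists_subset_card_eq hcon
    obtain ⟨T, hTle, hTcard, hTsum⟩ := hkmem (S'.val.map f) (by simp [hS'card])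
    obtain ⟨t, htle, htmap⟩ := exists_le_of_le_map f S'.val T hTle
    have htnodup : t.Nodup := Multiset.nodup_of_le htle S'.nodup
    set e : Finset (Fin n) := ⟨t, htnodup⟩ with he
    have hecard : e.card = r := by
      have : Multiset.card (t.map f) = r := by rw [htmap]; exact hTcard
      rw [Multiset.card_map] at this
      exact this
    have hesum : ∑ x ∈ e, f x = 0 := by
      have : (e.val.map f).sum = T.sum := by rw [he]; simp [htmap]
      rw [Finset.sum, this, hTsum]
    have heH : e ∈ H := by
      rw [hH, Finset.mem_filter]
      exact ⟨Finset.mem_univ _, hecard, hesum⟩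
    have heS : e ⊆ S := by
      refine Finset.Subset.trans ?_ hS'sub
      exact Finset.val_le_iff.mp htle
    exact hS e heH heS
  -- the codegree bound
  have hfiber : ∀ g : G, (Finset.univ.filter (fun v : Fin n => f v = g)).card ≤ n / q + 1 := by
    intro g
    have : (Finset.univ.filter (fun v : Fin n => f v = g)).card ≤
        (Finset.range (n / q + 1)).card := by
      refine Finset.card_le_card_of_injOn (fun i => (i : ℕ) / q) ?_ ?_
      · intro i _
        simp only [Finset.mem_coe, Finset.mem_range]
        exact Nat.lt_succ_of_le (Nat.div_le_div_right (le_of_lt i.isLt))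
      · intro i hi j hj hij
        simp only [Finset.mem_coe, Finset.mem_filter] at hi hj
        have hmod : (i : ℕ) % q = (j : ℕ) % q := by
          have : eqv ⟨(i : ℕ) % q, Nat.mod_lt _ hq⟩ = eqv ⟨(j : ℕ) % q, Nat.mod_lt _ hq⟩ := by
            rw [show eqv ⟨(i : ℕ) % q, Nat.mod_lt _ hq⟩ = f i from rfl,
              show eqv ⟨(j : ℕ) % q, Nat.mod_lt _ hq⟩ = f j from rfl, hi.2, hj.2]
          exact congrArg Fin.val (eqv.injective this)
        have hdiv : (i : ℕ) / q = (j : ℕ) / q := hij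
        have : (i : ℕ) = (j : ℕ) := by
          calc (i : ℕ) = q * ((i : ℕ) / q) + (i : ℕ) % q := (Nat.div_add_mod _ _).symm
            _ = q * ((j : ℕ) / q) + (j : ℕ) % q := by rw [hdiv, hmod]
            _ = (j : ℕ) := Nat.div_add_mod _ _
        exact Fin.ext this
    simpa using this
  have hdeg : maxDeg n H (r - 1) ≤ n / q + 1 := by
    apply Finset.sup_le
    intro A hA
    have hAcard : A.card = r - 1 := (Finset.mem_filter.mp hA).2
    set g : G := -∑ x ∈ A, f x with hg
    have hsub : H.filter (fun e => A ⊆ e) ⊆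
        (Finset.univ.filter (fun v : Fin n => f v = g)).image (fun v => insert v A) := by
      intro e he
      rw [Finset.mem_filter] at he
      obtain ⟨heH, hAe⟩ := he
      rw [hH, Finset.mem_filter] at heH
      obtain ⟨-, hecard, hesum⟩ := heH
      have hsd : (e \ A).card = 1 := by
        rw [Finset.card_sdiff_of_subset hAe, hecard, hAcard]; omega
      obtain ⟨v, hv⟩ := Finset.card_eq_one.mp hsd
      have hvmem : v ∈ e \ A := hv ▸ Finset.mem_singleton_self v
      have hvA : v ∉ A := (Finset.mem_sdiff.mp hvmem).2
      have hve : v ∈ e := (Finset.mem_sdiff.mp hvmem).1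
      have hins : insert v A = e := by
        apply Finset.eq_of_subset_of_card_le
        · intro x hx
          rcases Finset.mem_insert.mp hx with rfl | hx
          · exact hve
          · exact hAe hx
        · rw [hecard, Finset.card_insert_of_notMem hvA, hAcard]; omega
      have hfv : f v = g := by
        have : f v + ∑ x ∈ A, f x = 0 := by
          rw [← Finset.sum_insert hvA, hins, hesum]
        rw [hg]; exact eq_neg_of_add_eq_zero_left this
      rw [Finset.mem_image]
      exact ⟨v, Finset.mem_filter.mpr ⟨Finset.mem_univ _, hfv⟩, hins⟩
    calc (H.filter (fun e => A ⊆ e)).card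
        ≤ ((Finset.univ.filter (fun v : Fin n => f v = g)).image (fun v => insert v A)).card :=
          Finset.card_le_card hsub
      _ ≤ (Finset.univ.filter (fun v : Fin n => f v = g)).card := Finset.card_image_le
      _ ≤ n / q + 1 := hfiber g
  have hmem : maxDeg n H (r - 1) ∈ {D | ∃ H : Finset (Finset (Fin n)),
      (∀ e ∈ H, e.card = r) ∧
      (∀ S : Finset (Fin n), (∀ e ∈ H, ¬ e ⊆ S) → S.card < egzConst G r) ∧
      maxDeg n H (r - 1) = D} := ⟨H, hedge, hind, rfl⟩
  exact (Nat.sInf_le hmem).trans hdeg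

/-- If `G` is a finite abelian group and `r ≥ 2` is a multiple of `exp(G)`, then
`limsup_{n→∞} T_{r-1}(n, s_r(G), r) / (n − r + 1) ≤ 1 / |G|`. -/
theorem codegree_turan_upper_bound (G : Type*) [AddCommGroup G] [Fintype G]
    (r : ℕ) (hr : 2 ≤ r) (hdvd : AddMonoid.exponent G ∣ r) :
    Filter.limsup
      (fun n : ℕ => (turanMinDeg (r - 1) n (egzConst G r) r : ℝ) / ((n : ℝ) - r + 1))
      Filter.atTop ≤ 1 / (Fintype.card G : ℝ) := by
  set q := Fintype.card G with hqdef
  have hq : 0 < q := Fintype.card_pos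
  have hq' : (0 : ℝ) < q := by exact_mod_cast hq
  set F : ℕ → ℝ :=
    fun n : ℕ => (turanMinDeg (r - 1) n (egzConst G r) r : ℝ) / ((n : ℝ) - r + 1) with hF
  set Gfn : ℕ → ℝ := fun n : ℕ => ((n : ℝ) / q + 1) / ((n : ℝ) - r + 1) with hGfn
  -- eventual bounds
  have hpos : ∀ᶠ n : ℕ in Filter.atTop, (0 : ℝ) < (n : ℝ) - r + 1 := by
    filter_upwards [Filter.eventually_ge_atTop r] with n hn
    have : (r : ℝ) ≤ n := by exact_mod_cast hn
    linarith
  have hFG : ∀ᶠ n : ℕ in Filter.atTop, F n ≤ Gfn n := by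
    filter_upwards [hpos] with n hn
    have hnum : (turanMinDeg (r - 1) n (egzConst G r) r : ℝ) ≤ (n : ℝ) / q + 1 := by
      have h1 : (turanMinDeg (r - 1) n (egzConst G r) r : ℝ) ≤ ((n / q + 1 : ℕ) : ℝ) := by
        exact_mod_cast turan_le G r hr hdvd n
      have h2 : ((n / q : ℕ) : ℝ) ≤ (n : ℝ) / (q : ℝ) := Nat.cast_div_le
      push_cast at h1
      linarith
    rw [hF, hGfn]
    exact div_le_div_of_nonneg_right hnum hn.le |>.trans_eq rfl
  have hF0 : ∀ᶠ n : ℕ in Filter.atTop, (0 : ℝ) ≤ F n := by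
    filter_upwards [hpos] with n hn
    exact div_nonneg (Nat.cast_nonneg _) (le_of_lt hn)
  -- G tends to 1/q
  have hGtend : Filter.Tendsto Gfn Filter.atTop (nhds (1 / (q : ℝ))) := by
    have h1 : Filter.Tendsto (fun n : ℕ => (1 / (q : ℝ) + 1 / n) / (1 - ((r : ℝ) - 1) / n))
        Filter.atTop (nhds (1 / (q : ℝ))) := by
      have hinv : Filter.Tendsto (fun n : ℕ => (1 : ℝ) / n) Filter.atTop (nhds 0) :=
        tendsto_one_div_atTop_nhds_zero_nat
      have hnum : Filter.Tendsto (fun n : ℕ => 1 / (q : ℝ) + 1 / n) Filter.atTop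
          (nhds (1 / (q : ℝ) + 0)) := (tendsto_const_nhds).add hinv
      have hden : Filter.Tendsto (fun n : ℕ => 1 - ((r : ℝ) - 1) / n) Filter.atTop
          (nhds (1 - 0)) := by
        have : Filter.Tendsto (fun n : ℕ => ((r : ℝ) - 1) / n) Filter.atTop (nhds 0) := by
          have := hinv.const_mul ((r : ℝ) - 1)
          simpa [div_eq_mul_inv, mul_comm, mul_assoc] using this
        exact (tendsto_const_nhds).sub this
      have := hnum.div hden (by norm_num)
      rw [add_zero, sub_zero, div_one] at this
      exact this
    apply h1.congr'
    filter_upwards [Filter.eventually_ge_atTop r] with n hn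
    have hn' : (0 : ℝ) < n := by
      have : 0 < n := by omega
      exact_mod_cast this
    have hq0 : (q : ℝ) ≠ 0 := ne_of_gt (by exact_mod_cast hq)
    have hn0 : (n : ℝ) ≠ 0 := ne_of_gt hn'
    have hrn : (r : ℝ) ≤ n := by exact_mod_cast hn
    have hden : (n : ℝ) - r + 1 ≠ 0 := by
      have h2 : (2 : ℝ) ≤ r := by exact_mod_cast hr
      have : (0:ℝ) < (n : ℝ) - r + 1 := by linarith
      exact ne_of_gt this
    have hden2 : 1 - ((r : ℝ) - 1) / n ≠ 0 := by
      have : ((r : ℝ) - 1) / n < 1 := by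
        rw [div_lt_one hn']
        have : (2 : ℝ) ≤ r := by exact_mod_cast hr
        linarith
      linarith
    rw [hGfn]
    show (1 / (q:ℝ) + 1 / n) / (1 - ((r:ℝ) - 1) / n) = ((n:ℝ) / q + 1) / ((n:ℝ) - r + 1)
    rw [div_eq_div_iff hden2 hden]
    field_simp
    ring_nf
  -- conclude
  have hGbdd : Filter.IsBoundedUnder (· ≤ ·) Filter.atTop Gfn :=
    hGtend.isBoundedUnder_le
  have hFcob : Filter.IsCoboundedUnder (· ≤ ·) Filter.atTop F :=
    Filter.isCoboundedUnder_le_of_eventually_le Filter.atTop hF0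
  calc Filter.limsup F Filter.atTop ≤ Filter.limsup Gfn Filter.atTop :=
        Filter.limsup_le_limsup hFG hFcob hGbdd
    _ = 1 / (q : ℝ) := hGtend.limsup_eq
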